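/- If F is a leaf of a simplicial complex Δ with joint G, then removing G does not change the vertex covering number: α(Δ \ {G}) = α(Δ). -/
import Mathlib


open Finset

variable {α : Type*} [DecidableEq α]

/-- A set of vertices meeting every facet. -/
def IsVertexCover (Δ : Finset (Finset α)) (A : Finset α) : Prop :=
  ∀ F ∈ Δ, (A ∩ F).Nonempty

/-- A vertex cover none of whose proper subsets is a cover. -/
def IsMinimalVertexCover (Δ : Finset (Finset α)) (A : Finset α) : Prop :=
  IsVertexCover Δ A ∧ ∀ B ⊆ A, IsVertexCover Δ B → B = A

/-- The vertex covering number α(Δ). -/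
noncomputable def coverNum (Δ : Finset (Finset α)) : ℕ :=
  sInf {n | ∃ A : Finset α, IsVertexCover Δ A ∧ A.card = n}

/-- All minimal vertex covers have the same cardinality. -/
def Unmixed (Δ : Finset (Finset α)) : Prop :=
  ∀ A B : Finset α, IsMinimalVertexCover Δ A → IsMinimalVertexCover Δ B →
    A.card = B.card

/-- `F` is a leaf of `Δ`: it is the only facet, or some facet `G ≠ F`
satisfies `F ∩ F' ⊆ F ∩ G` for every facet `F' ≠ F`. -/
def IsLeaf (Δ : Finset (Finset α)) (F : Finset α) : Prop :=
  F ∈ Δ ∧ (Δ = {F} ∨ ∃ G ∈ Δ, G ≠ F ∧ ∀ F' ∈ Δ, F' ≠ F → F ∩ F' ⊆ F ∩ G)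

/-- `G` is a joint of the leaf `F` in `Δ`. -/
def IsJoint (Δ : Finset (Finset α)) (G F : Finset α) : Prop :=
  F ∈ Δ ∧ G ∈ Δ ∧ G ≠ F ∧ (∀ F' ∈ Δ, F' ≠ F → F ∩ F' ⊆ F ∩ G) ∧
    (F ∩ G).Nonempty

def HasLeaf (Δ : Finset (Finset α)) : Prop := ∃ F, IsLeaf Δ F

/-- Every nonempty subcollection has a leaf. -/
def IsForest (Δ : Finset (Finset α)) : Prop :=
  ∀ Γ ⊆ Δ, Γ.Nonempty → HasLeaf Γ

/-- Any two facets are linked by a chain of facets with consecutive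
nonempty intersections. -/
def ComplexConnected (Δ : Finset (Finset α)) : Prop :=
  ∀ F ∈ Δ, ∀ G ∈ Δ,
    Relation.ReflTransGen (fun A B => A ∈ Δ ∧ B ∈ Δ ∧ (A ∩ B).Nonempty) F G

def IsTree (Δ : Finset (Finset α)) : Prop := ComplexConnected Δ ∧ IsForest Δ

/-- An independent (pairwise disjoint) set of facets of `Δ`. -/
def IndependentFacets (Δ S : Finset (Finset α)) : Prop :=
  S ⊆ Δ ∧ ∀ F ∈ S, ∀ G ∈ S, F ≠ G → F ∩ G = ∅

/-- The independence number β(Δ). -/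
noncomputable def indepNum (Δ : Finset (Finset α)) : ℕ :=
  sSup {n | ∃ S : Finset (Finset α), IndependentFacets Δ S ∧ S.card = n}

/-- An independent set of facets not properly contained in another. -/
def MaximalIndependent (Δ S : Finset (Finset α)) : Prop :=
  IndependentFacets Δ S ∧ ∀ T, IndependentFacets Δ T → S ⊆ T → T = S

/-- `v` is a free vertex of the facet `F`: it belongs to no other facet. -/
def FreeVertex (Δ : Finset (Finset α)) (v : α) (F : Finset α) : Prop :=
  F ∈ Δ ∧ v ∈ F ∧ ∀ G ∈ Δ, v ∈ G → G = F

/-- The facets form an antichain (they are the maximal faces). -/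
def FacetAntichain (Δ : Finset (Finset α)) : Prop :=
  ∀ F ∈ Δ, ∀ G ∈ Δ, F ⊆ G → F = G

/-- Removing a joint of a leaf does not change the vertex covering number. -/
theorem coverNum_erase_joint (Δ : Finset (Finset α))
    (hmax : FacetAntichain Δ) (hne : ∀ F ∈ Δ, F.Nonempty)
    (F G : Finset α) (hleaf : IsLeaf Δ F) (hjoint : IsJoint Δ G F) :
    coverNum (Δ.erase G) = coverNum Δ := by
  obtain ⟨hF, hG, hGF, hsub, hFG⟩ := hjoint
  have hFe : F ∈ Δ.erase G := mem_erase.2 ⟨hGF.symm, hF⟩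
  have hUcov : IsVertexCover Δ (Δ.sup id) := by
    intro F' hF'
    obtain ⟨v, hv⟩ := hne F' hF'
    exact ⟨v, mem_inter.2 ⟨mem_sup.2 ⟨F', hF', hv⟩, hv⟩⟩
  have hrestrict : ∀ A : Finset α, IsVertexCover Δ A → IsVertexCover (Δ.erase G) A :=
    fun A h F' hF' => h F' (mem_of_mem_erase hF')
  have hS1 : {n | ∃ A : Finset α, IsVertexCover Δ A ∧ A.card = n}.Nonempty :=
    ⟨_, Δ.sup id, hUcov, rfl⟩
  have hS2 : {n | ∃ A : Finset α, IsVertexCover (Δ.erase G) A ∧ A.card = n}.Nonempty :=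
    ⟨_, Δ.sup id, hrestrict _ hUcov, rfl⟩
  obtain ⟨A, hA, hAc⟩ := Nat.sInf_mem hS1
  obtain ⟨B, hB, hBc⟩ := Nat.sInf_mem hS2
  refine le_antisymm (Nat.sInf_le ⟨A, hrestrict A hA, hAc⟩) ?_
  by_cases h : (B ∩ G).Nonempty
  · have hBcov : IsVertexCover Δ B := by
      intro F' hF'
      by_cases hF'G : F' = G
      · rwa [hF'G]
      · exact hB F' (mem_erase.2 ⟨hF'G, hF'⟩)
    calc coverNum Δ ≤ B.card := Nat.sInf_le ⟨B, hBcov, rfl⟩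
      _ = coverNum (Δ.erase G) := hBc
  · obtain ⟨x, hx⟩ := hB F hFe
    obtain ⟨y, hy⟩ := hFG
    have hxB : x ∈ B := (mem_inter.1 hx).1
    have hxF : x ∈ F := (mem_inter.1 hx).2
    have hyF : y ∈ F := (mem_inter.1 hy).1
    have hyG : y ∈ G := (mem_inter.1 hy).2
    set B' := insert y (B.erase x) with hB'
    have hB'cov : IsVertexCover Δ B' := by
      intro F' hF'
      by_cases hF'G : F' = G
      · exact ⟨y, mem_inter.2 ⟨mem_insert_self _ _, hF'G ▸ hyG⟩⟩
      by_cases hF'F : F' = F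
      · exact ⟨y, mem_inter.2 ⟨mem_insert_self _ _, hF'F ▸ hyF⟩⟩
      obtain ⟨z, hz⟩ := hB F' (mem_erase.2 ⟨hF'G, hF'⟩)
      have hzB : z ∈ B := (mem_inter.1 hz).1
      have hzF' : z ∈ F' := (mem_inter.1 hz).2
      have hzx : z ≠ x := by
        intro hzx
        subst hzx
        have hzG : z ∈ G := (mem_inter.1 (hsub F' hF' hF'F (mem_inter.2 ⟨hxF, hzF'⟩))).2
        exact h ⟨z, mem_inter.2 ⟨hzB, hzG⟩⟩
      exact ⟨z, mem_inter.2 ⟨mem_insert_of_mem (mem_erase.2 ⟨hzx, hzB⟩), hzF'⟩⟩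
    have hcard : B'.card ≤ B.card := by
      calc B'.card ≤ (B.erase x).card + 1 := card_insert_le _ _
        _ = B.card := card_erase_add_one hxB
    calc coverNum Δ ≤ B'.card := Nat.sInf_le ⟨B', hB'cov, rfl⟩
      _ ≤ B.card := hcard
      _ = coverNum (Δ.erase G) := hBc
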